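/- Let G be a 3-regular finite simple graph on n vertices (so n is even, n ≥ 4), and let q = 3n + 4. If a bijection π : V(G[q]) → V(D_{n,q}) satisfies μ_edit(G[q]^π, D_{n,q}) = δ_edit(G[q], D_{n,q}), then π is (G, C_n)-conservative, i.e., π maps V(G) (the original vertices of G inside G[q]) into V(C_n) (the original cycle vertices inside D_{n,q}). -/

import Mathlib

open SimpleGraph

section MismatchDefs

variable {V W : Type*}

/-- The mismatch graph `G^π − H`: the symmetric difference of the image of `G` under the
bijection `π` with `H`, as a graph on `V(H)`. Its edges are the positive edges
(edges of `G^π` not in `H`) together with the negative edges (edges of `H` not in `G^π`). -/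
def mismatchGraph (G : SimpleGraph V) (H : SimpleGraph W) (π : V ≃ W) : SimpleGraph W :=
  symmDiff (G.map π.toEmbedding) H

/-- The degree of a vertex in the mismatch graph `G^π − H`. -/
noncomputable def mismatchDeg (G : SimpleGraph V) (H : SimpleGraph W) (π : V ≃ W) (x : W) : ℕ :=
  ((mismatchGraph G H π).neighborSet x).ncard

/-- The number of positive edges of `G^π − H` incident to `x`. -/
noncomputable def posDeg (G : SimpleGraph V) (H : SimpleGraph W) (π : V ≃ W) (x : W) : ℕ :=
  ((G.map π.toEmbedding).neighborSet x \ H.neighborSet x).ncard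

/-- The number of negative edges of `G^π − H` incident to `x`. -/
noncomputable def negDeg (G : SimpleGraph V) (H : SimpleGraph W) (π : V ≃ W) (x : W) : ℕ :=
  (H.neighborSet x \ (G.map π.toEmbedding).neighborSet x).ncard

/-- The maximum mismatch count `MMC(π)`: the maximum degree of the mismatch graph `G^π − H`. -/
noncomputable def MMC [Fintype W] (G : SimpleGraph V) (H : SimpleGraph W) (π : V ≃ W) : ℕ :=
  Finset.univ.sup (mismatchDeg G H π)

/-- The edit mismatch norm `μ_edit(G^π, H)`: the number of edges of the mismatch graph. -/
noncomputable def muEdit (G : SimpleGraph V) (H : SimpleGraph W) (π : V ≃ W) : ℕ :=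
  (mismatchGraph G H π).edgeSet.ncard

/-- The edit distance `δ_edit(G, H)`: the minimum of `μ_edit(G^π, H)` over all bijections. -/
noncomputable def deltaEdit (G : SimpleGraph V) (H : SimpleGraph W) : ℕ :=
  ⨅ π : V ≃ W, muEdit G H π

open Classical in
/-- The signed adjacency matrix of the mismatch graph `G^π − H`:
`+1` on positive edges, `−1` on negative edges, `0` otherwise. -/
noncomputable def signedAdj (G : SimpleGraph V) (H : SimpleGraph W) (π : V ≃ W) :
    Matrix W W ℝ := fun x y =>
  if (G.map π.toEmbedding).Adj x y ∧ ¬ H.Adj x y then 1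
  else if H.Adj x y ∧ ¬ (G.map π.toEmbedding).Adj x y then -1 else 0

/-- The `ℓ_p` norm of a vector over a finite index type. -/
noncomputable def lpNorm [Fintype W] (p : ℝ) (x : W → ℝ) : ℝ :=
  (∑ i, |x i| ^ p) ^ p⁻¹

/-- The `ℓ_p`-operator norm of a matrix: `sup_{x ≠ 0} ‖Mx‖_p / ‖x‖_p`. -/
noncomputable def lpOpNorm [Fintype W] (p : ℝ) (M : Matrix W W ℝ) : ℝ :=
  ⨆ x : {x : W → ℝ // x ≠ 0}, lpNorm p (M.mulVec x.1) / lpNorm p x.1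

end MismatchDefs

/-- `G[q]`: attach an auxiliary `(q+1)`-clique to each vertex `v` of `G`.
The clique vertices of `v` are `Sum.inr (v, i)` for `i : Fin (q+1)`; the clique is joined
to `v` via the edge `{v^[1], v}`, where `v^[1]` is `Sum.inr (v, 0)`. -/
def extendCliques {V : Type*} (G : SimpleGraph V) (q : ℕ) :
    SimpleGraph (V ⊕ V × Fin (q + 1)) :=
  SimpleGraph.fromRel (fun a b =>
    match a, b with
    | Sum.inl u, Sum.inl v => G.Adj u v
    | Sum.inl u, Sum.inr (v, i) => u = v ∧ i = 0
    | Sum.inr _, Sum.inl _ => False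
    | Sum.inr (u, _), Sum.inr (v, _) => u = v)

/-- `D_{n,q}`: the graph `C_n[q]` together with the edges `{u^[1], v^[1]}` for `{u,v}`
ranging over the perfect matching `{{2i, 2i+1} : 0 ≤ i < n/2}` of the cycle `C_n`
(`n` even). -/
def Dgraph (n q : ℕ) : SimpleGraph (Fin n ⊕ Fin n × Fin (q + 1)) :=
  extendCliques (SimpleGraph.cycleGraph n) q ⊔
    SimpleGraph.fromRel (fun a b =>
      match a, b with
      | Sum.inr (u, i), Sum.inr (v, j) => i = 0 ∧ j = 0 ∧ u.val / 2 = v.val / 2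
      | _, _ => False)


section Helper
open Sum
section Adj

open Sum
variable {V : Type*} {G : SimpleGraph V} {q : ℕ}

lemma eC_inl_inl {u v : V} :
    (extendCliques G q).Adj (inl u) (inl v) ↔ G.Adj u v := by
  simp only [extendCliques, fromRel_adj]
  constructor
  · rintro ⟨-, h | h⟩
    · exact h
    · exact h.symm
  · exact fun h => ⟨by simpa using h.ne, Or.inl h⟩

lemma eC_inl_inr {u v : V} {i : Fin (q+1)} :
    (extendCliques G q).Adj (inl u) (inr (v, i)) ↔ u = v ∧ i = 0 := by
  simp only [extendCliques, fromRel_adj]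
  aesop

lemma eC_inr_inl {u v : V} {i : Fin (q+1)} :
    (extendCliques G q).Adj (inr (v, i)) (inl u) ↔ u = v ∧ i = 0 := by
  rw [adj_comm]; exact eC_inl_inr

lemma eC_inr_inr {u v : V} {i j : Fin (q+1)} :
    (extendCliques G q).Adj (inr (u, i)) (inr (v, j)) ↔ u = v ∧ i ≠ j := by
  simp only [extendCliques, fromRel_adj]
  aesop

lemma D_inl_inl {n : ℕ} {u v : Fin n} :
    (Dgraph n q).Adj (inl u) (inl v) ↔ (cycleGraph n).Adj u v := by
  simp only [Dgraph, sup_adj, fromRel_adj, eC_inl_inl]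
  aesop

lemma D_inl_inr {n : ℕ} {u v : Fin n} {i : Fin (q+1)} :
    (Dgraph n q).Adj (inl u) (inr (v, i)) ↔ u = v ∧ i = 0 := by
  simp only [Dgraph, sup_adj, fromRel_adj, eC_inl_inr]
  aesop

lemma D_inr_inl {n : ℕ} {u v : Fin n} {i : Fin (q+1)} :
    (Dgraph n q).Adj (inr (v, i)) (inl u) ↔ u = v ∧ i = 0 := by
  rw [adj_comm]; exact D_inl_inr

lemma D_inr_inr {n : ℕ} {u v : Fin n} {i j : Fin (q+1)} :
    (Dgraph n q).Adj (inr (u, i)) (inr (v, j)) ↔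
      (u = v ∧ i ≠ j) ∨ (i = 0 ∧ j = 0 ∧ u ≠ v ∧ u.val / 2 = v.val / 2) := by
  simp only [Dgraph, sup_adj, fromRel_adj, eC_inr_inr]
  constructor
  · rintro (h | ⟨hne, h | h⟩)
    · exact Or.inl h
    · exact Or.inr ⟨h.1, h.2.1, fun huv => hne (by rw [huv, h.1, h.2.1]), h.2.2⟩
    · exact Or.inr ⟨h.2.1, h.1, fun huv => hne (by rw [huv, h.2.1, h.1]), h.2.2.symm⟩
  · rintro (h | ⟨h1, h2, h3, h4⟩)
    · exact Or.inl h
    · exact Or.inr ⟨by simp [h3], Or.inl ⟨h1, h2, h4⟩⟩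

end Adj


section Counting
variable {W : Type*} [Fintype W]

lemma ncard_neighborSet_eq_degree (M : SimpleGraph W) [DecidableRel M.Adj] (x : W) :
    (M.neighborSet x).ncard = M.degree x := by
  rw [← card_neighborSet_eq_degree, Set.ncard_eq_toFinset_card', Set.toFinset_card]

lemma handshake (M : SimpleGraph W) :
    ∑ x, (M.neighborSet x).ncard = 2 * M.edgeSet.ncard := by
  classical
  have h := M.sum_degrees_eq_twice_card_edges
  calc ∑ x, (M.neighborSet x).ncard = ∑ x, M.degree x :=
        Finset.sum_congr rfl fun x _ => ncard_neighborSet_eq_degree M x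
  _ = 2 * M.edgeFinset.card := h
  _ = 2 * M.edgeSet.ncard := by
        rw [Set.ncard_eq_toFinset_card']
        congr 1

end Counting

lemma map_equiv_adj {α β : Type*} (G : SimpleGraph α) (π : α ≃ β) (x y : β) :
    (G.map π.toEmbedding).Adj x y ↔ G.Adj (π.symm x) (π.symm y) := by
  rw [map_adj]
  constructor
  · rintro ⟨a, b, h, rfl, rfl⟩; simpa using h
  · intro h; exact ⟨_, _, h, π.apply_symm_apply x, π.apply_symm_apply y⟩

lemma map_equiv_neighborSet {α β : Type*} (G : SimpleGraph α) (π : α ≃ β) (u : α) :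
    (G.map π.toEmbedding).neighborSet (π u) = π '' G.neighborSet u := by
  ext y
  simp only [mem_neighborSet, map_equiv_adj, Equiv.symm_apply_apply, Set.mem_image]
  constructor
  · intro h; exact ⟨π.symm y, h, π.apply_symm_apply y⟩
  · rintro ⟨b, hb, rfl⟩; simpa using hb

section NbrSets
open Sum
variable {V : Type*} {G : SimpleGraph V} {q : ℕ}

lemma ncard_ne_fin (q : ℕ) (i : Fin (q+1)) : ({j : Fin (q+1) | j ≠ i}).ncard = q := by
  have h : {j : Fin (q+1) | j ≠ i} = Set.univ \ {i} := by ext j; simp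
  rw [h, Set.ncard_diff (Set.subset_univ _), Set.ncard_univ, Set.ncard_singleton]
  simp [Nat.card_eq_fintype_card]

lemma eC_nbr_inl (v : V) :
    (extendCliques G q).neighborSet (inl v) = inl '' G.neighborSet v ∪ {inr (v, (0 : Fin (q+1)))} := by
  ext y
  cases y with
  | inl u => simp [mem_neighborSet, eC_inl_inl]
  | inr p =>
      obtain ⟨u, i⟩ := p
      simp [mem_neighborSet, eC_inl_inr, Prod.ext_iff, eq_comm, and_comm]

lemma eC_nbr_inr_superset (v : V) (i : Fin (q+1)) :
    (fun j => inr (v, j)) '' {j : Fin (q+1) | j ≠ i} ⊆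
      (extendCliques G q).neighborSet (inr (v, i)) := by
  rintro y ⟨j, hj, rfl⟩
  simp only [mem_neighborSet]
  exact eC_inr_inr.mpr ⟨rfl, fun h => hj h.symm⟩

lemma clique_ncard (v : V) (i : Fin (q+1)) :
    ((fun j => inr (v, j)) '' {j : Fin (q+1) | j ≠ i} : Set (V ⊕ V × Fin (q+1))).ncard = q := by
  rw [Set.ncard_image_of_injective _ (fun a b h => by simpa using h), ncard_ne_fin]

lemma D_nbr_inr_superset {n : ℕ} (v : Fin n) (i : Fin (q+1)) :
    (fun j => inr (v, j)) '' {j : Fin (q+1) | j ≠ i} ⊆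
      (Dgraph n q).neighborSet (inr (v, i)) := by
  rintro y ⟨j, hj, rfl⟩
  simp only [mem_neighborSet]
  exact D_inr_inr.mpr (Or.inl ⟨rfl, fun h => hj h.symm⟩)

lemma D_nbr_inl_subset {m : ℕ} (w : Fin (m+2)) :
    (Dgraph (m+2) q).neighborSet (inl w) ⊆
      {inl (w-1), inl (w+1), inr (w, (0 : Fin (q+1)))} := by
  intro y hy
  cases y with
  | inl u =>
      have h : u ∈ (cycleGraph (m+2)).neighborSet w := D_inl_inl.mp hy
      rw [cycleGraph_neighborSet] at h
      simp only [Set.mem_insert_iff, Set.mem_singleton_iff] at h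
      rcases h with h | h <;> simp [h]
  | inr p =>
      obtain ⟨u, i⟩ := p
      obtain ⟨rfl, rfl⟩ := D_inl_inr.mp hy
      simp

lemma mismatch_adj {α β : Type*} (G : SimpleGraph α) (H : SimpleGraph β) (π : α ≃ β) (x y : β) :
    (mismatchGraph G H π).Adj x y ↔
      ((G.map π.toEmbedding).Adj x y ∧ ¬ H.Adj x y) ∨
        (H.Adj x y ∧ ¬ (G.map π.toEmbedding).Adj x y) := by
  rw [mismatchGraph, symmDiff_def]
  simp [sup_adj, sdiff_adj]

lemma mismatch_nbr (G : SimpleGraph V) {β : Type*} (H : SimpleGraph β) (π : V ≃ β) (x : β) :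
    (mismatchGraph G H π).neighborSet x =
      ((G.map π.toEmbedding).neighborSet x \ H.neighborSet x) ∪
        (H.neighborSet x \ (G.map π.toEmbedding).neighborSet x) := by
  ext y
  simp [mem_neighborSet, mismatch_adj, Set.mem_diff, Set.mem_union]

end NbrSets
section Upper
open Sum

lemma upper_bound {V : Type*} [Fintype V] {m q : ℕ} (G : SimpleGraph V) [DecidableRel G.Adj]
    (hreg : G.IsRegularOfDegree 3) (σ : V ≃ Fin (m+2)) :
    muEdit (extendCliques G q) (Dgraph (m+2) q)
      (Equiv.sumCongr σ (Equiv.prodCongr σ (Equiv.refl (Fin (q+1))))) ≤ 3 * (m+2) := by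
  classical
  set π₀ := Equiv.sumCongr σ (Equiv.prodCongr σ (Equiv.refl (Fin (q+1)))) with hπ₀
  set M := mismatchGraph (extendCliques G q) (Dgraph (m+2) q) π₀ with hM
  have hsl : ∀ w : Fin (m+2), π₀.symm (inl w) = inl (σ.symm w) := fun w => rfl
  have hsr : ∀ (w : Fin (m+2)) (i : Fin (q+1)), π₀.symm (inr (w, i)) = inr (σ.symm w, i) :=
    fun w i => rfl
  have hMA : ∀ x y, M.Adj x y ↔
      (((extendCliques G q).Adj (π₀.symm x) (π₀.symm y) ∧ ¬ (Dgraph (m+2) q).Adj x y) ∨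
        ((Dgraph (m+2) q).Adj x y ∧ ¬ (extendCliques G q).Adj (π₀.symm x) (π₀.symm y))) := by
    intro x y
    rw [hM, mismatch_adj, map_equiv_adj]
  -- bound at inl w
  have hinl : ∀ w : Fin (m+2), (M.neighborSet (inl w)).ncard ≤ 5 := by
    intro w
    have hsub : M.neighborSet (inl w) ⊆
        inl '' (σ '' G.neighborSet (σ.symm w) ∪ (cycleGraph (m+2)).neighborSet w) := by
      intro y hy
      rw [mem_neighborSet, hMA] at hy
      cases y with
      | inl u =>
          refine ⟨u, ?_, rfl⟩
          rcases hy with ⟨h1, -⟩ | ⟨h1, -⟩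
          · rw [hsl, hsl, eC_inl_inl] at h1
            exact Or.inl ⟨σ.symm u, h1, by simp⟩
          · exact Or.inr (D_inl_inl.mp h1)
      | inr p =>
          obtain ⟨u, i⟩ := p
          exfalso
          rcases hy with ⟨h1, h2⟩ | ⟨h1, h2⟩
          · rw [hsl, hsr, eC_inl_inr] at h1
            exact h2 (D_inl_inr.mpr ⟨σ.symm.injective h1.1, h1.2⟩)
          · obtain ⟨rfl, rfl⟩ := D_inl_inr.mp h1
            exact h2 (by rw [hsl, hsr]; exact eC_inl_inr.mpr ⟨rfl, rfl⟩)
    calc (M.neighborSet (inl w)).ncard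
        ≤ (inl '' (σ '' G.neighborSet (σ.symm w) ∪ (cycleGraph (m+2)).neighborSet w) :
            Set (Fin (m+2) ⊕ Fin (m+2) × Fin (q+1))).ncard :=
          Set.ncard_le_ncard hsub (Set.toFinite _)
      _ = (σ '' G.neighborSet (σ.symm w) ∪ (cycleGraph (m+2)).neighborSet w).ncard :=
          Set.ncard_image_of_injective _ inl_injective
      _ ≤ (σ '' G.neighborSet (σ.symm w)).ncard + ((cycleGraph (m+2)).neighborSet w).ncard :=
          Set.ncard_union_le _ _
      _ ≤ 5 := by
          have h1 : (σ '' G.neighborSet (σ.symm w)).ncard = 3 := by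
            rw [Set.ncard_image_of_injective _ σ.injective,
              ncard_neighborSet_eq_degree, hreg (σ.symm w)]
          have h2 : ((cycleGraph (m+2)).neighborSet w).ncard ≤ 2 := by
            rw [cycleGraph_neighborSet]
            exact le_trans (Set.ncard_insert_le _ _)
              (by rw [Set.ncard_singleton])
          omega
  -- bound at inr (w, i)
  have hinr : ∀ (w : Fin (m+2)) (i : Fin (q+1)),
      (M.neighborSet (inr (w, i))).ncard ≤ if i = 0 then 1 else 0 := by
    intro w i
    by_cases hi : i = 0
    · subst hi
      rw [if_pos rfl, Set.ncard_le_one_iff (Set.toFinite _)]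
      intro a b ha hb
      have key : ∀ y ∈ M.neighborSet (inr (w, (0 : Fin (q+1)))),
          ∃ w' : Fin (m+2), w' ≠ w ∧ w'.val / 2 = w.val / 2 ∧ y = inr (w', 0) := by
        intro y hy
        rw [mem_neighborSet, hMA] at hy
        cases y with
        | inl u =>
            exfalso
            rcases hy with ⟨h1, h2⟩ | ⟨h1, h2⟩
            · rw [hsr, hsl, eC_inr_inl] at h1
              exact h2 (D_inr_inl.mpr ⟨σ.symm.injective h1.1, h1.2⟩)
            · obtain ⟨rfl, -⟩ := D_inr_inl.mp h1
              exact h2 (by rw [hsr, hsl]; exact eC_inr_inl.mpr ⟨rfl, rfl⟩)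
        | inr p =>
            obtain ⟨u, j⟩ := p
            rcases hy with ⟨h1, h2⟩ | ⟨h1, h2⟩
            · exfalso
              rw [hsr, hsr, eC_inr_inr] at h1
              exact h2 (D_inr_inr.mpr (Or.inl ⟨σ.symm.injective h1.1, h1.2⟩))
            · have h1' := D_inr_inr.mp h1
              rw [hsr, hsr, eC_inr_inr] at h2
              rcases h1' with ⟨rfl, hne⟩ | ⟨-, hj0, hne, hdiv⟩
              · exact absurd ⟨rfl, hne⟩ h2
              · exact ⟨u, fun h => hne (h ▸ rfl), hdiv.symm, by rw [hj0]⟩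
      obtain ⟨w1, hw1, hd1, rfl⟩ := key a ha
      obtain ⟨w2, hw2, hd2, rfl⟩ := key b hb
      have : w1 = w2 := by
        have h1 : w1.val ≠ w.val := fun h => hw1 (Fin.ext h)
        have h2' : w2.val ≠ w.val := fun h => hw2 (Fin.ext h)
        exact Fin.ext (by omega)
      rw [this]
    · simp only [if_neg hi]
      have : M.neighborSet (inr (w, i)) = ∅ := by
        ext y
        simp only [mem_neighborSet, Set.mem_empty_iff_false, iff_false]
        rw [hMA]
        cases y with
        | inl u =>
            rintro (⟨h1, -⟩ | ⟨h1, h2⟩)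
            · rw [hsr, hsl, eC_inr_inl] at h1
              exact hi h1.2
            · exact hi (D_inr_inl.mp h1).2
        | inr p =>
            obtain ⟨u, j⟩ := p
            rintro (⟨h1, h2⟩ | ⟨h1, h2⟩)
            · rw [hsr, hsr, eC_inr_inr] at h1
              exact h2 (D_inr_inr.mpr (Or.inl ⟨σ.symm.injective h1.1, h1.2⟩))
            · rcases D_inr_inr.mp h1 with ⟨rfl, hne⟩ | ⟨hi0, -⟩
              · exact h2 (by rw [hsr, hsr]; exact eC_inr_inr.mpr ⟨rfl, hne⟩)
              · exact hi hi0
      rw [this, Set.ncard_empty]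
  -- sum up
  have hsum := handshake M
  rw [Fintype.sum_sum_type] at hsum
  have hbound1 : ∑ w : Fin (m+2), (M.neighborSet (inl w)).ncard ≤ 5 * (m+2) := by
    calc ∑ w : Fin (m+2), (M.neighborSet (inl w)).ncard ≤ ∑ _w : Fin (m+2), 5 :=
          Finset.sum_le_sum fun w _ => hinl w
      _ = 5 * (m+2) := by simp [Finset.sum_const, mul_comm]
  have hbound2 : ∑ p : Fin (m+2) × Fin (q+1), (M.neighborSet (inr p)).ncard ≤ m+2 := by
    calc ∑ p : Fin (m+2) × Fin (q+1), (M.neighborSet (inr p)).ncard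
        ≤ ∑ p : Fin (m+2) × Fin (q+1), (if p.2 = 0 then 1 else 0) :=
          Finset.sum_le_sum fun p _ => hinr p.1 p.2
      _ = m+2 := by
          rw [Fintype.sum_prod_type]
          simp [Finset.sum_ite_eq']
  have : 2 * muEdit (extendCliques G q) (Dgraph (m+2) q) π₀ ≤ 6 * (m+2) := by
    rw [muEdit, ← hM, ← hsum]
    omega
  omega

end Upper
theorem statement_3 {V : Type*} [Fintype V] (n : ℕ) (hEven : Even n) (hn : 4 ≤ n)
    (G : SimpleGraph V) [DecidableRel G.Adj] (hcard : Fintype.card V = n)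
    (hreg : G.IsRegularOfDegree 3)
    (π : (V ⊕ V × Fin (3 * n + 4 + 1)) ≃ (Fin n ⊕ Fin n × Fin (3 * n + 4 + 1)))
    (hopt : muEdit (extendCliques G (3 * n + 4)) (Dgraph n (3 * n + 4)) π
      = deltaEdit (extendCliques G (3 * n + 4)) (Dgraph n (3 * n + 4))) :
    ∀ v : V, ∃ w : Fin n, π (Sum.inl v) = Sum.inl w := by
  classical
  obtain ⟨m, rfl⟩ : ∃ m, n = m + 2 := ⟨n - 2, by omega⟩
  intro v
  by_contra hcon
  push_neg at hcon
  -- π (inl v) lands in the right part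
  obtain ⟨w, i, hx⟩ : ∃ (w : Fin (m+2)) (i : Fin ((3 * (m + 2) + 4)+1)), π (Sum.inl v) = Sum.inr (w, i) := by
    cases hpv : π (Sum.inl v) with
    | inl w => exact absurd hpv (hcon w)
    | inr p =>
        obtain ⟨w1, i1⟩ := p
        exact ⟨w1, i1, rfl⟩
  set M := mismatchGraph (extendCliques G (3 * (m + 2) + 4)) (Dgraph (m+2) (3 * (m + 2) + 4)) π with hM
  -- upper bound on the optimum
  have σ : V ≃ Fin (m+2) := Fintype.equivFinOfCardEq hcard
  have hδ : muEdit (extendCliques G (3 * (m + 2) + 4)) (Dgraph (m+2) (3 * (m + 2) + 4)) π ≤ 3 * (m+2) := by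
    rw [hopt, deltaEdit]
    exact le_trans (ciInf_le (OrderBot.bddBelow _)
      (Equiv.sumCongr σ (Equiv.prodCongr σ (Equiv.refl (Fin ((3 * (m + 2) + 4)+1))))))
      (upper_bound G hreg σ)
  -- lower bound at x = π (inl v)
  have hNA : ((extendCliques G (3 * (m + 2) + 4)).map π.toEmbedding).neighborSet (Sum.inr (w, i))
      = π '' (extendCliques G (3 * (m + 2) + 4)).neighborSet (Sum.inl v) := by
    rw [← hx, map_equiv_neighborSet]
  have hNAcard : (((extendCliques G (3 * (m + 2) + 4)).map π.toEmbedding).neighborSet (Sum.inr (w, i))).ncard ≤ 4 := by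
    rw [hNA, Set.ncard_image_of_injective _ π.injective, eC_nbr_inl]
    refine le_trans (Set.ncard_union_le _ _) ?_
    rw [Set.ncard_singleton, Set.ncard_image_of_injective _ Sum.inl_injective,
      ncard_neighborSet_eq_degree, hreg v]
  have hNDcard : (3 * (m + 2) + 4) ≤ ((Dgraph (m+2) (3 * (m + 2) + 4)).neighborSet (Sum.inr (w, i))).ncard := by
    calc (3 * (m + 2) + 4) = ((fun j => Sum.inr (w, j)) '' {j : Fin ((3 * (m + 2) + 4)+1) | j ≠ i} :
          Set (Fin (m+2) ⊕ Fin (m+2) × Fin ((3 * (m + 2) + 4)+1))).ncard := (clique_ncard w i).symm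
      _ ≤ _ := Set.ncard_le_ncard (D_nbr_inr_superset w i) (Set.toFinite _)
  have hdx : 3 * (m+2) ≤ (M.neighborSet (Sum.inr (w, i))).ncard := by
    have hsub : (Dgraph (m+2) (3 * (m + 2) + 4)).neighborSet (Sum.inr (w, i)) \
        ((extendCliques G (3 * (m + 2) + 4)).map π.toEmbedding).neighborSet (Sum.inr (w, i)) ⊆
        M.neighborSet (Sum.inr (w, i)) := by
      rw [hM, mismatch_nbr]
      exact Set.subset_union_right
    have h1 := Set.le_ncard_diff
      (((extendCliques G (3 * (m + 2) + 4)).map π.toEmbedding).neighborSet (Sum.inr (w, i)))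
      ((Dgraph (m+2) (3 * (m + 2) + 4)).neighborSet (Sum.inr (w, i))) (Set.toFinite _)
    have h2 := Set.ncard_le_ncard hsub (Set.toFinite _)
    omega
  -- pigeonhole: some clique vertex maps to a cycle vertex
  obtain ⟨a, w', hy⟩ : ∃ (a : V × Fin ((3 * (m + 2) + 4)+1)) (w' : Fin (m+2)),
      π (Sum.inr a) = Sum.inl w' := by
    by_contra h2
    push_neg at h2
    have hg : ∀ a : V × Fin ((3 * (m + 2) + 4)+1), ∃ b, π (Sum.inr a) = Sum.inr b := by
      intro a
      cases hpa : π (Sum.inr a) with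
      | inl w' => exact absurd hpa (h2 a w')
      | inr b => exact ⟨b, rfl⟩
    choose g hgspec using hg
    have hginj : Function.Injective g := by
      intro a b hab
      have : π (Sum.inr a) = π (Sum.inr b) := by rw [hgspec a, hgspec b, hab]
      exact Sum.inr_injective (π.injective this)
    have hgsurj : Function.Surjective g :=
      ((Fintype.bijective_iff_injective_and_card g).mpr
        ⟨hginj, by simp [hcard]⟩).2
    obtain ⟨a, ha⟩ := hgsurj (w, i)
    have : π (Sum.inr a) = π (Sum.inl v) := by rw [hgspec a, ha, hx]
    exact absurd (π.injective this) (by simp)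
  -- lower bound at y = π (inr a)
  have hNA' : ((extendCliques G (3 * (m + 2) + 4)).map π.toEmbedding).neighborSet (Sum.inl w')
      = π '' (extendCliques G (3 * (m + 2) + 4)).neighborSet (Sum.inr a) := by
    rw [← hy, map_equiv_neighborSet]
  have hNAcard' : (3 * (m + 2) + 4) ≤ (((extendCliques G (3 * (m + 2) + 4)).map π.toEmbedding).neighborSet (Sum.inl w')).ncard := by
    rw [hNA']
    calc (3 * (m + 2) + 4) = (π '' ((fun j => Sum.inr (a.1, j)) '' {j : Fin ((3 * (m + 2) + 4)+1) | j ≠ a.2})).ncard := by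
          rw [Set.ncard_image_of_injective _ π.injective, clique_ncard]
      _ ≤ _ := Set.ncard_le_ncard
          (Set.image_mono (by simpa using eC_nbr_inr_superset a.1 a.2)) (Set.toFinite _)
  have hNDcard' : ((Dgraph (m+2) (3 * (m + 2) + 4)).neighborSet (Sum.inl w')).ncard ≤ 3 := by
    refine le_trans (Set.ncard_le_ncard (D_nbr_inl_subset w') (Set.toFinite _)) ?_
    refine le_trans (Set.ncard_insert_le _ _) ?_
    refine Nat.add_le_add_right (le_trans (Set.ncard_insert_le _ _) ?_) 1
    rw [Set.ncard_singleton]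
  have hdy : 3 * (m+2) + 1 ≤ (M.neighborSet (Sum.inl w')).ncard := by
    have hsub : ((extendCliques G (3 * (m + 2) + 4)).map π.toEmbedding).neighborSet (Sum.inl w') \
        (Dgraph (m+2) (3 * (m + 2) + 4)).neighborSet (Sum.inl w') ⊆ M.neighborSet (Sum.inl w') := by
      rw [hM, mismatch_nbr]
      exact Set.subset_union_left
    have h1 := Set.le_ncard_diff
      ((Dgraph (m+2) (3 * (m + 2) + 4)).neighborSet (Sum.inl w'))
      (((extendCliques G (3 * (m + 2) + 4)).map π.toEmbedding).neighborSet (Sum.inl w')) (Set.toFinite _)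
    have h2 := Set.ncard_le_ncard hsub (Set.toFinite _)
    omega
  -- combine
  have hsum := handshake M
  have hxy : (Sum.inr (w, i) : Fin (m+2) ⊕ Fin (m+2) × Fin ((3 * (m + 2) + 4)+1)) ≠ Sum.inl w' := by simp
  have hpair : (M.neighborSet (Sum.inr (w, i))).ncard + (M.neighborSet (Sum.inl w')).ncard
      ≤ ∑ x, (M.neighborSet x).ncard := by
    refine le_trans ?_ (Finset.sum_le_sum_of_subset
      (Finset.subset_univ ({Sum.inr (w, i), Sum.inl w'} :
        Finset (Fin (m+2) ⊕ Fin (m+2) × Fin ((3 * (m + 2) + 4)+1)))))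
    rw [Finset.sum_pair hxy]
  rw [hsum] at hpair
  have : muEdit (extendCliques G (3 * (m + 2) + 4)) (Dgraph (m+2) (3 * (m + 2) + 4)) π = M.edgeSet.ncard := rfl
  omega
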